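/- Let (Ω, μ) be a finite measure space, a < 0 < b, and let K₀ = {w ∈ L²(μ) : a ≤ w ≤ b a.e., ∫ w dμ = 0}. Then K₀ is nonempty, closed, and convex in L²(μ), and for v ∈ L²(μ) the metric projection of v onto K₀ equals x ↦ min(b, max(a, v(x) + m)) for some m ∈ ℝ chosen so that the integral of the result is zero. -/

import Mathlib

open MeasureTheory Filter

private lemma clip_key {a b u t : ℝ} (hab : a ≤ b) (hu1 : a ≤ u) (hu2 : u ≤ b) :
    0 ≤ (t - min b (max a t)) * (min b (max a t) - u) := by
  rcases le_total t a with h | h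
  · rw [max_eq_left h, min_eq_right hab]; nlinarith
  · rcases le_total t b with h2 | h2
    · rw [max_eq_right h, min_eq_right h2]; simp
    · rw [max_eq_right h, min_eq_left h2]; nlinarith

theorem stmt_9
    {Ω : Type*} [MeasurableSpace Ω] (μ : Measure Ω) [IsFiniteMeasure μ]
    (hμ : 0 < μ Set.univ)
    (a b : ℝ) (ha : a < 0) (hb : 0 < b)
    (K₀ : Set (Lp ℝ 2 μ))
    (hK₀ : K₀ = {w : Lp ℝ 2 μ | (∀ᵐ x ∂μ, a ≤ w x ∧ w x ≤ b) ∧ ∫ x, w x ∂μ = 0})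
    (v : Lp ℝ 2 μ) :
    K₀.Nonempty ∧ IsClosed K₀ ∧ Convex ℝ K₀ ∧
      ∃ w ∈ K₀, ∃ m : ℝ, (w : Ω → ℝ) =ᵐ[μ] (fun x => min b (max a (v x + m))) ∧
        ∀ u ∈ K₀, ‖v - w‖ ≤ ‖v - u‖ := by
  have hab : a ≤ b := ha.le.trans hb.le
  have hint : ∀ f : Lp ℝ 2 μ, Integrable (fun x => f x) μ :=
    fun f => (Lp.memLp f).integrable one_le_two
  -- Nonempty
  have h0 : (0 : Lp ℝ 2 μ) ∈ K₀ := by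
    rw [hK₀]
    constructor
    · filter_upwards [Lp.coeFn_zero ℝ 2 μ] with x hx
      rw [hx]; exact ⟨ha.le, hb.le⟩
    · rw [integral_congr_ae (Lp.coeFn_zero ℝ 2 μ)]; simp
  -- Closedness
  have hone : ∀ w : Lp ℝ 2 μ, (inner ℝ (Lp.const 2 μ (1 : ℝ)) w : ℝ) = ∫ x, w x ∂μ := by
    intro w
    rw [L2.inner_def]
    refine integral_congr_ae ?_
    filter_upwards [Lp.coeFn_const 2 μ (1 : ℝ)] with x hx
    rw [RCLike.inner_apply', conj_trivial, hx]
    simp [Function.const]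
  have hclosed : IsClosed K₀ := by
    have : K₀ = Set.Icc (Lp.const 2 μ a) (Lp.const 2 μ b) ∩
        {w : Lp ℝ 2 μ | (inner ℝ (Lp.const 2 μ (1 : ℝ)) w : ℝ) = 0} := by
      ext w
      rw [hK₀]
      simp only [Set.mem_setOf_eq, Set.mem_inter_iff, Set.mem_Icc, hone w]
      constructor
      · rintro ⟨hbd, hin⟩
        refine ⟨⟨?_, ?_⟩, hin⟩
        · rw [← Lp.coeFn_le]
          filter_upwards [Lp.coeFn_const 2 μ a, hbd] with x hx hx2
          rw [hx]; exact hx2.1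
        · rw [← Lp.coeFn_le]
          filter_upwards [Lp.coeFn_const 2 μ b, hbd] with x hx hx2
          rw [hx]; exact hx2.2
      · rintro ⟨⟨h1, h2⟩, hin⟩
        refine ⟨?_, hin⟩
        rw [← Lp.coeFn_le] at h1 h2
        filter_upwards [Lp.coeFn_const 2 μ a, Lp.coeFn_const 2 μ b, h1, h2]
          with x hxa hxb h1x h2x
        rw [hxa] at h1x
        rw [hxb] at h2x
        exact ⟨h1x, h2x⟩
    rw [this]
    exact isClosed_Icc.inter
      (isClosed_eq (Continuous.inner continuous_const continuous_id) continuous_const)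
  -- Convexity
  have hconv : Convex ℝ K₀ := by
    rw [hK₀]
    rintro w₁ ⟨h1b, h1i⟩ w₂ ⟨h2b, h2i⟩ c d hc hd hcd
    constructor
    · filter_upwards [Lp.coeFn_add (c • w₁) (d • w₂), Lp.coeFn_smul c w₁,
        Lp.coeFn_smul d w₂, h1b, h2b] with x hx hx1 hx2 hb1 hb2
      rw [hx, Pi.add_apply, hx1, hx2, Pi.smul_apply, Pi.smul_apply, smul_eq_mul, smul_eq_mul]
      constructor
      · nlinarith [hb1.1, hb2.1]
      · nlinarith [hb1.2, hb2.2]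
    · have : ∫ x, (c • w₁ + d • w₂ : Lp ℝ 2 μ) x ∂μ = ∫ x, (c * w₁ x + d * w₂ x) ∂μ := by
        refine integral_congr_ae ?_
        filter_upwards [Lp.coeFn_add (c • w₁) (d • w₂), Lp.coeFn_smul c w₁,
          Lp.coeFn_smul d w₂] with x hx hx1 hx2
        rw [hx, Pi.add_apply, hx1, hx2, Pi.smul_apply, Pi.smul_apply, smul_eq_mul, smul_eq_mul]
      rw [this, integral_add ((hint w₁).const_mul c) ((hint w₂).const_mul d),
        integral_const_mul, integral_const_mul, h1i, h2i]
      ring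
  refine ⟨⟨0, h0⟩, hclosed, hconv, ?_⟩
  -- existence of m
  have hmeas : ∀ m : ℝ, AEStronglyMeasurable (fun x => min b (max a (v x + m))) μ := by
    intro m
    exact (continuous_const.min ((continuous_const.max (continuous_id.add
      continuous_const)))).comp_aestronglyMeasurable (Lp.aestronglyMeasurable v)
  have hbound : ∀ m : ℝ, ∀ x : Ω, ‖min b (max a (v x + m))‖ ≤ max |a| |b| := by
    intro m x
    rw [Real.norm_eq_abs, abs_le]
    constructor
    · calc -(max |a| |b|) ≤ -|a| := by simp
        _ ≤ a := neg_abs_le a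
        _ ≤ min b (max a (v x + m)) := le_min hab (le_max_left _ _)
    · exact (min_le_left _ _).trans ((le_abs_self b).trans (le_max_right _ _))
  have hmem : ∀ m : ℝ, MemLp (fun x => min b (max a (v x + m))) 2 μ :=
    fun m => MemLp.of_bound (hmeas m) _ (ae_of_all _ (hbound m))
  set φ : ℝ → ℝ := fun m => ∫ x, min b (max a (v x + m)) ∂μ with hφ
  have hmuR : 0 < (μ Set.univ).toReal :=
    ENNReal.toReal_pos hμ.ne' (measure_ne_top μ _)
  have hcont : Continuous φ := by
    rw [continuous_iff_continuousAt]
    intro m₀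
    refine tendsto_integral_filter_of_dominated_convergence (fun _ => max |a| |b|)
      (Eventually.of_forall (fun m => hmeas m))
      (Eventually.of_forall (fun m => ae_of_all _ (hbound m)))
      (integrable_const _) (ae_of_all _ fun x => ?_)
    exact ((continuous_const.min (continuous_const.max
      (continuous_const.add continuous_id))).tendsto m₀)
  have htop : Tendsto φ atTop (nhds (b * (μ Set.univ).toReal)) := by
    have : Tendsto φ atTop (nhds (∫ _x, b ∂μ)) := by
      refine tendsto_integral_filter_of_dominated_convergence (fun _ => max |a| |b|)
        (Eventually.of_forall (fun m => hmeas m))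
        (Eventually.of_forall (fun m => ae_of_all _ (hbound m)))
        (integrable_const _) (ae_of_all _ fun x => ?_)
      refine tendsto_const_nhds.congr' ?_
      filter_upwards [eventually_ge_atTop (b - v x)] with m hm
      have : b ≤ v x + m := by linarith
      exact (min_eq_left ((le_max_right a (v x + m)).trans' this)).symm
    simpa [integral_const, smul_eq_mul, mul_comm, measureReal_def] using this
  have hbot : Tendsto φ atBot (nhds (a * (μ Set.univ).toReal)) := by
    have : Tendsto φ atBot (nhds (∫ _x, a ∂μ)) := by
      refine tendsto_integral_filter_of_dominated_convergence (fun _ => max |a| |b|)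
        (Eventually.of_forall (fun m => hmeas m))
        (Eventually.of_forall (fun m => ae_of_all _ (hbound m)))
        (integrable_const _) (ae_of_all _ fun x => ?_)
      refine tendsto_const_nhds.congr' ?_
      filter_upwards [eventually_le_atBot (a - v x)] with m hm
      have : v x + m ≤ a := by linarith
      rw [max_eq_left this, min_eq_right hab]
    simpa [integral_const, smul_eq_mul, mul_comm, measureReal_def] using this
  obtain ⟨m₂, hm₂⟩ := (htop.eventually (eventually_gt_nhds (mul_pos hb hmuR))).exists
  obtain ⟨m₁, hm₁⟩ := (hbot.eventually (eventually_lt_nhds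
    (mul_neg_of_neg_of_pos ha hmuR))).exists
  have h0mem : (0 : ℝ) ∈ Set.uIcc (φ m₁) (φ m₂) :=
    Set.mem_uIcc.mpr (Or.inl ⟨hm₁.le, hm₂.le⟩)
  obtain ⟨m, _, hφm⟩ := intermediate_value_uIcc (hcont.continuousOn) h0mem
  -- the projection
  set w : Lp ℝ 2 μ := (hmem m).toLp _ with hwdef
  have hw_coe : (w : Ω → ℝ) =ᵐ[μ] fun x => min b (max a (v x + m)) := (hmem m).coeFn_toLp
  have hw_int : ∫ x, w x ∂μ = 0 := by
    rw [integral_congr_ae hw_coe]; exact hφm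
  have hw_mem : w ∈ K₀ := by
    rw [hK₀]
    refine ⟨?_, hw_int⟩
    filter_upwards [hw_coe] with x hx
    rw [hx]
    exact ⟨le_min hab (le_max_left _ _), min_le_left _ _⟩
  refine ⟨w, hw_mem, m, hw_coe, ?_⟩
  intro u hu
  rw [hK₀] at hu
  obtain ⟨hu_bd, hu_int⟩ := hu
  set cm : Lp ℝ 2 μ := Lp.const 2 μ m with hcm
  have hinner : (0 : ℝ) ≤ inner ℝ (v - w) (w - u) := by
    have hsplit : (inner ℝ (v - w) (w - u) : ℝ) =
        inner ℝ ((v + cm) - w) (w - u) - inner ℝ cm (w - u) := by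
      rw [inner_sub_left, inner_sub_left, inner_add_left]; ring
    have hc0 : (inner ℝ cm (w - u) : ℝ) = 0 := by
      rw [L2.inner_def]
      have : ∫ x, (inner ℝ (cm x) ((w - u) x) : ℝ) ∂μ = ∫ x, m * (w x - u x) ∂μ := by
        refine integral_congr_ae ?_
        filter_upwards [Lp.coeFn_const 2 μ m, Lp.coeFn_sub w u] with x hx hx2
        rw [RCLike.inner_apply', conj_trivial, hx, hx2, Pi.sub_apply]
        rfl
      rw [this, integral_const_mul, integral_sub (hint w) (hint u), hw_int, hu_int]
      ring
    have hpos : (0 : ℝ) ≤ inner ℝ ((v + cm) - w) (w - u) := by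
      rw [L2.inner_def]
      refine integral_nonneg_of_ae ?_
      filter_upwards [Lp.coeFn_sub (v + cm) w, Lp.coeFn_sub w u, Lp.coeFn_add v cm,
        Lp.coeFn_const 2 μ m, hw_coe, hu_bd] with x h1 h2 h3 h4 h5 h6
      rw [h1, Pi.sub_apply, h2, Pi.sub_apply, h3, Pi.add_apply, h4, h5]
      simpa [RCLike.inner_apply', Function.const, mul_comm] using clip_key hab h6.1 h6.2 (t := v x + m)
    rw [hsplit, hc0, sub_zero]
    exact hpos
  have hdecomp : v - u = (v - w) + (w - u) := by abel
  have hsq : ‖v - w‖ ^ 2 ≤ ‖v - u‖ ^ 2 := by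
    rw [hdecomp, norm_add_sq_real]
    nlinarith [sq_nonneg ‖w - u‖]
  nlinarith [norm_nonneg (v - w), norm_nonneg (v - u)]
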